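/- Fix an integer r > 0 and let Λ be a left artinian ring. The following are equivalent: (b) for every simple Λ-module S, every left artinian ring Γ, every nonzero finitely generated Γ-module T, and all minimal projective resolutions (Pₙ, dₙ) of S over Λ and (Qₙ, dₙ) of T over Γ, if sup {n | Pₙ ≠ 0} ≤ sup {n | Qₙ ≠ 0} (in ℕ∞), then for every n ∈ ℕ, ℓ(Pₙ) > ℓ(Qₙ) implies sup {n | Pₙ ≠ 0} < n + r (in ℕ∞); (c) every simple Λ-module S satisfies either sup {n | Pₙ ≠ 0} < r or ℓ(P₀) = 2, where (Pₙ, dₙ) is any minimal projective resolution of S. -/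

import Mathlib

/-- rad X = (Jacobson radical of Λ) • X -/
def ModuleRad (Λ : Type) [Ring Λ] (X : Type) [AddCommGroup X] [Module Λ X] :
    Submodule Λ X :=
  Submodule.span Λ {z : X | ∃ r ∈ Ideal.jacobson (⊥ : Ideal Λ), ∃ x : X, z = r • x}

/-- composition length of a module, as the supremum of lengths of strictly
increasing chains of submodules from `⊥` to `⊤`. -/
noncomputable def ModuleLength (Λ : Type) [Ring Λ] (X : Type) [AddCommGroup X]
    [Module Λ X] : ℕ∞ :=
  ⨆ n ∈ {n : ℕ | ∃ c : Fin (n + 1) → Submodule Λ X,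
      StrictMono c ∧ c 0 = ⊥ ∧ c (Fin.last n) = ⊤}, (n : ℕ∞)

/-- a nonzero module that is not an internal direct sum of two nonzero submodules -/
def IndecomposableModule (Λ : Type) [Ring Λ] (X : Type) [AddCommGroup X]
    [Module Λ X] : Prop :=
  (∃ x : X, x ≠ 0) ∧
    ¬ ∃ A B : Submodule Λ X, A ≠ ⊥ ∧ B ≠ ⊥ ∧ IsCompl A B

/-- a minimal projective resolution of `M` -/
structure MinProjRes (Λ : Type) [Ring Λ] (M : Type) [AddCommGroup M] [Module Λ M] where
  P : ℕ → Type
  acg : ∀ n, AddCommGroup (P n)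
  mod : ∀ n, Module Λ (P n)
  proj : ∀ n, Module.Projective Λ (P n)
  fg : ∀ n, Module.Finite Λ (P n)
  d0 : P 0 →ₗ[Λ] M
  d : ∀ n, P (n + 1) →ₗ[Λ] P n
  surj : Function.Surjective d0
  exact0 : LinearMap.range (d 0) = LinearMap.ker d0
  exact : ∀ n, LinearMap.range (d (n + 1)) = LinearMap.ker (d n)
  min0 : LinearMap.ker d0 ≤ ModuleRad Λ (P 0)
  min : ∀ n, LinearMap.ker (d n) ≤ ModuleRad Λ (P (n + 1))

attribute [instance] MinProjRes.acg MinProjRes.mod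

/-- the projective dimension read off from a minimal projective resolution:
`sup {n | Pₙ ≠ 0}` in `ℕ∞` -/
noncomputable def MinProjRes.pd {Λ : Type} [Ring Λ] {M : Type} [AddCommGroup M]
    [Module Λ M] (res : MinProjRes Λ M) : ℕ∞ :=
  ⨆ n ∈ {n : ℕ | ∃ x : res.P n, x ≠ 0}, (n : ℕ∞)

/-- Condition (F) -/
def ConditionF (Λ : Type) [Ring Λ] : Prop :=
  ∀ (P : Type) [AddCommGroup P] [Module Λ P],
    Module.Finite Λ P → Module.Projective Λ P → IndecomposableModule Λ P →
      (Module.Projective Λ ↥(ModuleRad Λ P) ∨ IsSimpleModule Λ ↥(ModuleRad Λ P))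


section Aux
variable {Λ : Type} [Ring Λ] {X : Type} [AddCommGroup X] [Module Λ X]

lemma moduleRad_eq_smul :
    ModuleRad Λ X = Ideal.jacobson (⊥ : Ideal Λ) • (⊤ : Submodule Λ X) := by
  apply le_antisymm
  · rw [ModuleRad, Submodule.span_le]
    rintro z ⟨r, hr, x, rfl⟩
    exact Submodule.smul_mem_smul hr trivial
  · refine Submodule.smul_le.2 fun r hr x _ => ?_
    exact Submodule.subset_span ⟨r, hr, x, rfl⟩

lemma moduleRad_le_coatom {m : Submodule Λ X} (hm : IsCoatom m) : ModuleRad Λ X ≤ m := by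
  rw [ModuleRad, Submodule.span_le]
  rintro z ⟨r, hr, x, rfl⟩
  by_contra hz
  have hlt : m < m ⊔ Submodule.span Λ {r • x} := by
    refine lt_of_le_of_ne le_sup_left fun e => hz ?_
    have hmem : r • x ∈ m ⊔ Submodule.span Λ {r • x} :=
      Submodule.mem_sup_right (Submodule.mem_span_singleton_self _)
    rwa [← e] at hmem
  have htop := hm.2 _ hlt
  have hx : x ∈ m ⊔ Submodule.span Λ {r • x} := by rw [htop]; trivial
  obtain ⟨y, hy, w, hw, hsum⟩ := Submodule.mem_sup.1 hx
  obtain ⟨c, rfl⟩ := Submodule.mem_span_singleton.1 hw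
  obtain ⟨z, hz0⟩ := Ideal.mem_jacobson_iff.1 hr (-c)
  have hz1 : z * -c * r + z = 1 := by
    have h0 : z * -c * r + z - 1 = 0 := by simpa using hz0
    exact sub_eq_zero.mp h0
  have hzinv : z * (1 - c * r) = 1 := by
    have e2 : z * (1 - c * r) = z * -c * r + z := by noncomm_ring
    rw [e2, hz1]
  have hym : ((1 : Λ) - c * r) • x ∈ m := by
    have e : ((1 : Λ) - c * r) • x = y := by
      rw [smul_smul] at hsum
      rw [sub_smul, one_smul]
      exact sub_eq_of_eq_add hsum.symm
    rwa [e]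
  have hxm : x ∈ m := by
    have hmem := m.smul_mem z hym
    rwa [smul_smul, hzinv, one_smul] at hmem
  exact hz (m.smul_mem r hxm)

lemma nakayama_eq_zero [Module.Finite Λ X]
    (h : (⊤ : Submodule Λ X) ≤ ModuleRad Λ X) (x : X) : x = 0 := by
  have hcompact : IsCompactElement (⊤ : Submodule Λ X) :=
    (Submodule.fg_iff_compact _).1 (Module.finite_def.mp inferInstance)
  have hco : IsCoatomic (Submodule Λ X) := CompleteLattice.coatomic_of_top_compact hcompact
  rcases hco.eq_top_or_exists_le_coatom (⊥ : Submodule Λ X) with hbt | ⟨m, hm, -⟩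
  · have hx : x ∈ (⊥ : Submodule Λ X) := by rw [hbt]; trivial
    simpa using hx
  · exact absurd (top_le_iff.1 (h.trans (moduleRad_le_coatom hm))) hm.1

lemma le_moduleLength {n : ℕ} (c : Fin (n + 1) → Submodule Λ X) (hc : StrictMono c)
    (h0 : c 0 = ⊥) (h1 : c (Fin.last n) = ⊤) : (n : ℕ∞) ≤ ModuleLength Λ X :=
  le_biSup _ ⟨c, hc, h0, h1⟩

lemma moduleLength_le {m : ℕ∞}
    (h : ∀ (n : ℕ) (c : Fin (n + 1) → Submodule Λ X), StrictMono c → c 0 = ⊥ →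
      c (Fin.last n) = ⊤ → (n : ℕ∞) ≤ m) : ModuleLength Λ X ≤ m :=
  iSup₂_le fun n hn => by obtain ⟨c, h1, h2, h3⟩ := hn; exact h n c h1 h2 h3

lemma one_le_moduleLength (h : ∃ x : X, x ≠ 0) : 1 ≤ ModuleLength Λ X := by
  obtain ⟨x, hx⟩ := h
  have hbt : (⊥ : Submodule Λ X) < ⊤ := by
    rcases lt_or_eq_of_le (le_top : (⊥ : Submodule Λ X) ≤ ⊤) with h | h
    · exact h
    · exact absurd (Submodule.mem_bot Λ |>.1 (by rw [h]; trivial)) hx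
  refine le_moduleLength ![⊥, ⊤] ?_ rfl rfl
  rw [Fin.strictMono_iff_lt_succ]
  intro i
  fin_cases i <;> simpa using hbt

lemma two_le_moduleLength {N : Submodule Λ X} (h1 : ⊥ < N) (h2 : N < ⊤) :
    2 ≤ ModuleLength Λ X := by
  refine le_moduleLength ![⊥, N, ⊤] ?_ rfl rfl
  rw [Fin.strictMono_iff_lt_succ]
  intro i
  fin_cases i <;> simp [h1, h2]

lemma three_le_moduleLength {M N : Submodule Λ X} (h0 : ⊥ < M) (h1 : M < N)
    (h2 : N < ⊤) : 3 ≤ ModuleLength Λ X := by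
  refine le_moduleLength ![⊥, M, N, ⊤] ?_ rfl rfl
  rw [Fin.strictMono_iff_lt_succ]
  intro i
  fin_cases i <;> simp [h0, h1, h2, Fin.castSucc, Fin.castAdd, Fin.castLE]

lemma submodule_eq_bot_or_top_of_length_lt_two (h : ModuleLength Λ X < 2)
    (N : Submodule Λ X) : N = ⊥ ∨ N = ⊤ := by
  by_contra hc
  push_neg at hc
  exact absurd (two_le_moduleLength (bot_lt_iff_ne_bot.2 hc.1) (lt_top_iff_ne_top.2 hc.2))
    (not_le.2 h)

lemma isAtom_of_length_le_two (h : ModuleLength Λ X ≤ 2) {N : Submodule Λ X}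
    (hb : N ≠ ⊥) (ht : N ≠ ⊤) : IsAtom N := by
  refine ⟨hb, fun M hM => ?_⟩
  by_contra hMb
  have h3 := three_le_moduleLength (bot_lt_iff_ne_bot.2 hMb) hM (lt_top_iff_ne_top.2 ht)
  have : (3 : ℕ∞) ≤ 2 := h3.trans h
  norm_num at this

end Aux

namespace MinProjRes

variable {Λ : Type} [Ring Λ] {M : Type} [AddCommGroup M] [Module Λ M]
  (res : MinProjRes Λ M)

lemma eq_zero_succ {n : ℕ} (h : ∀ x : res.P n, x = 0) (x : res.P (n + 1)) : x = 0 := by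
  haveI := res.fg (n + 1)
  have hker : LinearMap.ker (res.d n) = ⊤ := by
    ext y; simp [LinearMap.mem_ker, h (res.d n y)]
  have htop : (⊤ : Submodule Λ (res.P (n + 1))) ≤ ModuleRad Λ (res.P (n + 1)) := by
    rw [← hker]; exact res.min n
  exact nakayama_eq_zero htop x

lemma eq_zero_mono {k n : ℕ} (hkn : k ≤ n) (h : ∀ x : res.P k, x = 0) :
    ∀ x : res.P n, x = 0 := by
  induction n, hkn using Nat.le_induction with
  | base => exact h
  | succ n _ ih => exact res.eq_zero_succ ih

lemma nonzero_mono {k n : ℕ} (hkn : k ≤ n) (h : ∃ x : res.P n, x ≠ 0) :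
    ∃ x : res.P k, x ≠ 0 := by
  by_contra hc
  push_neg at hc
  obtain ⟨x, hx⟩ := h
  exact hx (res.eq_zero_mono hkn hc x)

lemma le_pd {n : ℕ} (h : ∃ x : res.P n, x ≠ 0) : (n : ℕ∞) ≤ res.pd :=
  le_biSup _ h

lemma pd_le {m : ℕ∞} (h : ∀ n : ℕ, (∃ x : res.P n, x ≠ 0) → (n : ℕ∞) ≤ m) :
    res.pd ≤ m :=
  iSup₂_le h

lemma nonzero_of_le_pd {n : ℕ} (hn : n ≠ 0) (h : (n : ℕ∞) ≤ res.pd) :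
    ∃ x : res.P n, x ≠ 0 := by
  by_contra hx
  push_neg at hx
  have hle : res.pd ≤ ((n - 1 : ℕ) : ℕ∞) := by
    refine res.pd_le fun k hk => ?_
    have hkn : k < n := by
      by_contra hkk
      obtain ⟨y, hy⟩ := res.nonzero_mono (le_of_not_gt hkk) hk
      exact hy (hx y)
    exact_mod_cast by omega
  have := h.trans hle
  rw [Nat.cast_le] at this
  omega

lemma pd_le_zero_of_ker_eq_bot (h : LinearMap.ker res.d0 = ⊥) : res.pd ≤ 0 := by
  have h1 : ∀ x : res.P 1, x = 0 := by
    have hd : LinearMap.range (res.d 0) = ⊥ := res.exact0.trans h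
    rw [LinearMap.range_eq_bot] at hd
    have hker : LinearMap.ker (res.d 0) = ⊤ := by rw [hd]; exact LinearMap.ker_zero
    haveI := res.fg 1
    exact fun x => nakayama_eq_zero (by rw [← hker]; exact res.min 0) x
  refine res.pd_le fun n hn => ?_
  match n with
  | 0 => exact le_rfl
  | (m + 1) =>
    exfalso
    obtain ⟨x, hx⟩ := hn
    exact hx (res.eq_zero_mono (Nat.one_le_iff_ne_zero.2 (by omega)) h1 x)

/-- the shifted resolution, resolving the first syzygy `ker d0`. -/
noncomputable def shift : MinProjRes Λ ↥(LinearMap.ker res.d0) where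
  P n := res.P (n + 1)
  acg n := res.acg (n + 1)
  mod n := res.mod (n + 1)
  proj n := res.proj (n + 1)
  fg n := res.fg (n + 1)
  d0 := (res.d 0).codRestrict (LinearMap.ker res.d0)
    (fun x => res.exact0 ▸ LinearMap.mem_range_self _ x)
  d n := res.d (n + 1)
  surj := by
    rintro ⟨y, hy⟩
    rw [← res.exact0] at hy
    obtain ⟨x, hx⟩ := hy
    exact ⟨x, Subtype.ext hx⟩
  exact0 := by rw [LinearMap.ker_codRestrict]; exact res.exact 0
  exact n := res.exact (n + 1)
  min0 := by rw [LinearMap.ker_codRestrict]; exact res.min 0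
  min n := res.min (n + 1)

lemma pd_le_shift_pd_add_one : res.pd ≤ res.shift.pd + 1 := by
  refine res.pd_le fun n hn => ?_
  match n with
  | 0 => simp
  | (m + 1) =>
    have hm : (m : ℕ∞) ≤ res.shift.pd := res.shift.le_pd hn
    calc ((m + 1 : ℕ) : ℕ∞) = (m : ℕ∞) + 1 := by push_cast; ring
    _ ≤ res.shift.pd + 1 := add_le_add_left hm 1

lemma shift_pd_mono {Γ : Type} [Ring Γ] {N : Type} [AddCommGroup N] [Module Γ N]
    (resT : MinProjRes Γ N) (h : res.pd ≤ resT.pd) : res.shift.pd ≤ resT.shift.pd := by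
  refine res.shift.pd_le fun m hm => ?_
  have h1 : ((m + 1 : ℕ) : ℕ∞) ≤ resT.pd := le_trans (res.le_pd hm) h
  exact resT.shift.le_pd (resT.nonzero_of_le_pd (by omega) h1)

end MinProjRes

section ZMod4

abbrev I2 : Submodule (ZMod 4) (ZMod 4) := Submodule.span (ZMod 4) {(2 : ZMod 4)}

lemma two_mem_jacobson4 : (2 : ZMod 4) ∈ Ideal.jacobson (⊥ : Ideal (ZMod 4)) := by
  rw [Ideal.mem_jacobson_bot]
  intro y
  have hy := (by decide : ∀ z : ZMod 4, z = 0 ∨ z = 1 ∨ z = 2 ∨ z = 3) y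
  refine IsUnit.of_mul_eq_one (2 * y + 1) ?_
  rcases hy with rfl | rfl | rfl | rfl <;> decide

lemma range_two_smul :
    LinearMap.range ((2 : ZMod 4) • (LinearMap.id : ZMod 4 →ₗ[ZMod 4] ZMod 4)) = I2 := by
  ext x
  simp only [LinearMap.mem_range, LinearMap.smul_apply, LinearMap.id_apply,
    Submodule.mem_span_singleton, smul_eq_mul]
  constructor
  · rintro ⟨c, rfl⟩; exact ⟨c, by ring⟩
  · rintro ⟨c, rfl⟩; exact ⟨c, by ring⟩

lemma ker_two_smul :
    LinearMap.ker ((2 : ZMod 4) • (LinearMap.id : ZMod 4 →ₗ[ZMod 4] ZMod 4)) = I2 := by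
  have key : ∀ x : ZMod 4, 2 * x = 0 ↔ ∃ c : ZMod 4, c * 2 = x := by decide
  ext x
  simp only [LinearMap.mem_ker, LinearMap.smul_apply, LinearMap.id_apply,
    Submodule.mem_span_singleton, smul_eq_mul]
  exact key x

lemma I2_le_rad : I2 ≤ ModuleRad (ZMod 4) (ZMod 4) := by
  rw [Submodule.span_le]
  rintro z hz
  rw [Set.mem_singleton_iff] at hz
  subst hz
  exact Submodule.subset_span ⟨2, two_mem_jacobson4, 1, by decide⟩

noncomputable def zmodRes : MinProjRes (ZMod 4) (ZMod 4 ⧸ I2) where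
  P _ := ZMod 4
  acg _ := inferInstance
  mod _ := inferInstance
  proj _ := inferInstance
  fg _ := inferInstance
  d0 := I2.mkQ
  d _ := (2 : ZMod 4) • LinearMap.id
  surj := I2.mkQ_surjective
  exact0 := by rw [Submodule.ker_mkQ]; exact range_two_smul
  exact _ := by rw [ker_two_smul]; exact range_two_smul
  min0 := by rw [Submodule.ker_mkQ]; exact I2_le_rad
  min _ := by rw [ker_two_smul]; exact I2_le_rad

lemma zmodRes_nonzero (n : ℕ) : ∃ x : zmodRes.P n, x ≠ 0 :=
  ⟨(1 : ZMod 4), by show (1 : ZMod 4) ≠ 0; decide⟩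

lemma zmod4_submodule_classify (N : Submodule (ZMod 4) (ZMod 4)) :
    N = ⊥ ∨ N = I2 ∨ N = ⊤ := by
  have helts : ∀ x : ZMod 4, x = 0 ∨ x = 1 ∨ x = 2 ∨ x = 3 := by decide
  by_cases h1 : (1 : ZMod 4) ∈ N
  · right; right
    rw [Submodule.eq_top_iff']
    intro x
    simpa using N.smul_mem x h1
  · by_cases h3 : (3 : ZMod 4) ∈ N
    · exfalso
      have h9 : (3 : ZMod 4) • (3 : ZMod 4) ∈ N := N.smul_mem 3 h3
      rw [show (3 : ZMod 4) • (3 : ZMod 4) = 1 from by decide] at h9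
      exact h1 h9
    · by_cases h2 : (2 : ZMod 4) ∈ N
      · right; left
        apply le_antisymm
        · intro x hx
          rcases helts x with rfl | rfl | rfl | rfl
          · exact Submodule.zero_mem _
          · exact absurd hx h1
          · exact Submodule.subset_span rfl
          · exact absurd hx h3
        · rw [Submodule.span_le]
          rintro z hz
          rw [Set.mem_singleton_iff] at hz
          subst hz; exact h2
      · left
        rw [Submodule.eq_bot_iff]
        intro x hx
        rcases helts x with rfl | rfl | rfl | rfl
        · rfl
        · exact absurd hx h1
        · exact absurd hx h2
        · exact absurd hx h3

lemma zmod4_length_le_two : ModuleLength (ZMod 4) (ZMod 4) ≤ 2 := by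
  refine moduleLength_le fun n c hc h0 h1 => ?_
  by_contra hn
  have hn3 : 3 ≤ n := by
    rw [not_le] at hn
    have hn2 : (2 : ℕ) < n := by exact_mod_cast hn
    omega
  have e01 : c ⟨0, by omega⟩ < c ⟨1, by omega⟩ := hc (by simp [Fin.lt_def])
  have e12 : c ⟨1, by omega⟩ < c ⟨2, by omega⟩ := hc (by simp [Fin.lt_def])
  have e2l : c ⟨2, by omega⟩ < c (Fin.last n) := hc (by simp [Fin.lt_def]; omega)
  have hc0 : c ⟨0, by omega⟩ = ⊥ := h0
  have hne1b : c ⟨1, by omega⟩ ≠ ⊥ := by rw [← hc0]; exact ne_of_gt e01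
  have hne1t : c ⟨1, by omega⟩ ≠ ⊤ := by
    intro e; rw [e] at e12
    exact not_top_lt (e12.trans_le le_top)
  have hne2b : c ⟨2, by omega⟩ ≠ ⊥ := by
    intro e; rw [e] at e12; exact not_lt_bot e12
  have hne2t : c ⟨2, by omega⟩ ≠ ⊤ := by
    intro e; rw [e, h1] at e2l; exact lt_irrefl _ e2l
  have hcl1 := zmod4_submodule_classify (c ⟨1, by omega⟩)
  have hcl2 := zmod4_submodule_classify (c ⟨2, by omega⟩)
  have h1I : c ⟨1, by omega⟩ = I2 := by tauto
  have h2I : c ⟨2, by omega⟩ = I2 := by tauto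
  rw [h1I, h2I] at e12
  exact lt_irrefl _ e12
end ZMod4

lemma ker_ne_top_of_nontrivial {Λ : Type} [Ring Λ] {M : Type} [AddCommGroup M]
    [Module Λ M] (res : MinProjRes Λ M) (h : ∃ x : M, x ≠ 0) :
    LinearMap.ker res.d0 ≠ ⊤ := by
  intro e
  obtain ⟨x, hx⟩ := h
  obtain ⟨y, rfl⟩ := res.surj x
  have hy : y ∈ LinearMap.ker res.d0 := by rw [e]; trivial
  exact hx (LinearMap.mem_ker.1 hy)

lemma backward_aux (r : ℕ) (hr : 0 < r) (Λ : Type) [Ring Λ] [IsArtinianRing Λ]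
    (hc : ∀ (S : Type) [AddCommGroup S] [Module Λ S], IsSimpleModule Λ S →
      ∀ resS : MinProjRes Λ S,
        resS.pd < (r : ℕ∞) ∨ ModuleLength Λ (resS.P 0) = 2) :
    ∀ (n : ℕ) (S : Type) [AddCommGroup S] [Module Λ S], IsSimpleModule Λ S →
      ∀ (Γ : Type) [Ring Γ] (T : Type) [AddCommGroup T] [Module Γ T],
        (∃ x : T, x ≠ 0) →
        ∀ (resS : MinProjRes Λ S) (resT : MinProjRes Γ T), resS.pd ≤ resT.pd →
          ModuleLength Γ (resT.P n) < ModuleLength Λ (resS.P n) →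
          resS.pd < (n : ℕ∞) + (r : ℕ∞) := by
  intro n
  induction n with
  | zero =>
    intro S _ _ hS Γ _ T _ _ hTne resS resT hpd hlen
    rcases hc S hS resS with h | h
    · exact h.trans_le (by simp)
    · rw [h] at hlen
      have hQ0ne : ∃ x : resT.P 0, x ≠ 0 := by
        obtain ⟨x, hx⟩ := hTne
        obtain ⟨y, hy⟩ := resT.surj x
        exact ⟨y, fun e => hx (by rw [← hy, e, map_zero])⟩
      have hclass := submodule_eq_bot_or_top_of_length_lt_two hlen
      have hrad : ModuleRad Γ (resT.P 0) = ⊥ := by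
        rcases hclass (ModuleRad Γ (resT.P 0)) with e | e
        · exact e
        · exfalso
          haveI := resT.fg 0
          obtain ⟨x, hx⟩ := hQ0ne
          exact hx (nakayama_eq_zero (by rw [e]) x)
      have hker : LinearMap.ker resT.d0 = ⊥ :=
        le_bot_iff.1 (hrad ▸ resT.min0)
      have hT0 : resT.pd ≤ 0 := resT.pd_le_zero_of_ker_eq_bot hker
      refine lt_of_le_of_lt (hpd.trans hT0) ?_
      have : (0 : ℕ∞) < (r : ℕ∞) := by exact_mod_cast hr
      simpa using this
  | succ n ih =>
    intro S _ _ hS Γ _ T _ _ hTne resS resT hpd hlen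
    rcases hc S hS resS with h | hP2
    · exact h.trans_le le_add_self
    have hpos : (0 : ℕ∞) < ((n + 1 : ℕ) : ℕ∞) + (r : ℕ∞) :=
      lt_of_lt_of_le (by exact_mod_cast Nat.succ_pos n) le_self_add
    by_cases hkS : LinearMap.ker resS.d0 = ⊥
    · exact lt_of_le_of_lt (resS.pd_le_zero_of_ker_eq_bot hkS) hpos
    by_cases hkT : LinearMap.ker resT.d0 = ⊥
    · exact lt_of_le_of_lt (hpd.trans (resT.pd_le_zero_of_ker_eq_bot hkT)) hpos
    haveI := hS
    haveI : Nontrivial S := IsSimpleModule.nontrivial (R := Λ) (M := S)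
    have hkStop : LinearMap.ker resS.d0 ≠ ⊤ :=
      ker_ne_top_of_nontrivial resS (exists_ne 0)
    haveI hS' : IsSimpleModule Λ ↥(LinearMap.ker resS.d0) :=
      isSimpleModule_iff_isAtom.2 (isAtom_of_length_le_two hP2.le hkS hkStop)
    have hT'ne : ∃ x : ↥(LinearMap.ker resT.d0), x ≠ 0 := by
      obtain ⟨y, hy, hy0⟩ := Submodule.ne_bot_iff _ |>.1 hkT
      exact ⟨⟨y, hy⟩, fun e => hy0 (by simpa using congrArg Subtype.val e)⟩
    have hstep := ih ↥(LinearMap.ker resS.d0) hS' Γ ↥(LinearMap.ker resT.d0) hT'ne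
      resS.shift resT.shift (resS.shift_pd_mono resT hpd) hlen
    have h3 : resS.shift.pd + 1 ≤ (n : ℕ∞) + (r : ℕ∞) := Order.add_one_le_of_lt hstep
    have h4 : resS.pd ≤ (n : ℕ∞) + (r : ℕ∞) := resS.pd_le_shift_pd_add_one.trans h3
    refine h4.trans_lt ?_
    have h5 : ((n + r : ℕ) : ℕ∞) < ((n + 1 + r : ℕ) : ℕ∞) := Nat.cast_lt.2 (by omega)
    push_cast at h5
    convert h5 using 2 <;> push_cast <;> rfl


/-- for a fixed `r > 0` and a left artinian ring `Λ`,
condition (b) (comparing minimal projective resolutions of simple `Λ`-modules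
with those of arbitrary nonzero finitely generated modules over arbitrary left
artinian rings, via the preorder `≼` with parameter `r`) is equivalent to
condition (c): every simple `Λ`-module has projective dimension `< r` or
projective cover of length `2`. -/
theorem star_iff_pd_or_len_two (r : ℕ) (hr : 0 < r)
    (Λ : Type) [Ring Λ] [IsArtinianRing Λ] :
    (∀ (S : Type) [AddCommGroup S] [Module Λ S], IsSimpleModule Λ S →
      ∀ (Γ : Type) [Ring Γ] [IsArtinianRing Γ]
        (T : Type) [AddCommGroup T] [Module Γ T],
        (∃ x : T, x ≠ 0) → Module.Finite Γ T →
        ∀ (resS : MinProjRes Λ S) (resT : MinProjRes Γ T),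
          resS.pd ≤ resT.pd →
          ∀ n : ℕ, ModuleLength Γ (resT.P n) < ModuleLength Λ (resS.P n) →
            resS.pd < (n : ℕ∞) + (r : ℕ∞)) ↔
    (∀ (S : Type) [AddCommGroup S] [Module Λ S], IsSimpleModule Λ S →
      ∀ resS : MinProjRes Λ S,
        resS.pd < (r : ℕ∞) ∨ ModuleLength Λ (resS.P 0) = 2) := by
  constructor
  · intro hb S _ _ hS resS
    by_cases hpd : resS.pd < (r : ℕ∞)
    · exact Or.inl hpd
    right
    have hTne : ∃ x : ZMod 4 ⧸ I2, x ≠ 0 := by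
      refine ⟨Submodule.Quotient.mk 1, ?_⟩
      rw [Ne, Submodule.Quotient.mk_eq_zero]
      simp only [Submodule.mem_span_singleton, smul_eq_mul]
      decide
    have hTfin : Module.Finite (ZMod 4) (ZMod 4 ⧸ I2) :=
      Module.Finite.of_surjective I2.mkQ I2.mkQ_surjective
    have hple : resS.pd ≤ zmodRes.pd :=
      resS.pd_le fun n _ => zmodRes.le_pd (zmodRes_nonzero n)
    have key := hb S hS (ZMod 4) (ZMod 4 ⧸ I2) hTne hTfin resS zmodRes hple 0
    have hnotlt : ¬ ModuleLength (ZMod 4) (zmodRes.P 0) < ModuleLength Λ (resS.P 0) := by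
      intro hlt
      exact hpd (by simpa using key hlt)
    have hle2 : ModuleLength Λ (resS.P 0) ≤ 2 :=
      (not_lt.1 hnotlt).trans zmod4_length_le_two
    haveI := hS
    haveI : Nontrivial S := IsSimpleModule.nontrivial (R := Λ) (M := S)
    have hkt : LinearMap.ker resS.d0 ≠ ⊤ :=
      ker_ne_top_of_nontrivial resS (exists_ne 0)
    have hkb : LinearMap.ker resS.d0 ≠ ⊥ := by
      intro e
      exact hpd ((resS.pd_le_zero_of_ker_eq_bot e).trans_lt (by exact_mod_cast hr))
    have h2le : 2 ≤ ModuleLength Λ (resS.P 0) :=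
      two_le_moduleLength (bot_lt_iff_ne_bot.2 hkb) (lt_top_iff_ne_top.2 hkt)
    exact le_antisymm hle2 h2le
  · intro hc S _ _ hS Γ _ _ T _ _ hTne _ resS resT hpd n hlen
    exact backward_aux r hr Λ hc n S hS Γ T hTne resS resT hpd hlen
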